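/- There exists a constant C > 0 such that for every odd g ∈ C^∞((−1,1)) with ∫_{−1}^{1}|g(x)|² dx < ∞, all s ≥ 0, and all y ∈ (−1,1), one has |u_{0,g}(s,y)| ≤ C e^{−s/2} (∫_{−1}^{1}|g(x)|² dx)^{1/2}. -/

import Mathlib

open MeasureTheory Set ENNReal

/-- The solution `u_{0,g}` of the hyperboloidal free wave equation with data `(0,g)`. -/
noncomputable def u0g (g : ℝ → ℂ) (s y : ℝ) : ℂ :=
  (1/2) * ∫ x in (-1 + Real.exp (-s) * (1 + y))..(1 - Real.exp (-s) * (1 - y)), g x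

lemma cs_bound {g : ℝ → ℂ} (a c : ℝ) (hsub : Set.uIcc a c ⊆ Ioo (-1:ℝ) 1)
    (hcont : ContinuousOn g (Ioo (-1:ℝ) 1))
    (hint : IntegrableOn (fun x => ‖g x‖^2) (Ioo (-1:ℝ) 1)) :
    ‖∫ x in a..c, g x‖ ≤
      Real.sqrt |c - a| * Real.sqrt (∫ x in Ioo (-1:ℝ) 1, ‖g x‖^2) := by
  have hsub' : Set.uIoc a c ⊆ Ioo (-1:ℝ) 1 :=
    (Set.Ioc_subset_Icc_self).trans hsub
  set ν : Measure ℝ := volume.restrict (Set.uIoc a c) with hν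
  have hνuniv : ν Set.univ = ENNReal.ofReal |c - a| := by
    rw [hν, Measure.restrict_apply_univ, Set.uIoc, Real.volume_Ioc]
    congr 1
    rcases le_total a c with h | h
    · rw [abs_of_nonneg (by linarith), min_eq_left h, max_eq_right h]
    · rw [abs_of_nonpos (by linarith), min_eq_right h, max_eq_left h]; ring
  haveI : IsFiniteMeasure ν := ⟨by rw [hνuniv]; exact ENNReal.ofReal_lt_top⟩
  have hmeas : AEStronglyMeasurable g ν :=
    (hcont.mono hsub').aestronglyMeasurable measurableSet_uIoc
  have hg2 : MemLp g 2 ν := by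
    rw [memLp_two_iff_integrable_sq_norm hmeas]
    exact (hint.mono_set hsub')
  have hone : MemLp (fun _ : ℝ => (1 : ℝ)) 2 ν := memLp_const 1
  have hpq : Real.HolderConjugate 2 2 := by
    constructor <;> norm_num
  have h2 : ENNReal.ofReal (2:ℝ) = 2 := by norm_num
  have hg2' : MemLp (fun x => ‖g x‖) (ENNReal.ofReal 2) ν := by rw [h2]; exact hg2.norm
  have hone' : MemLp (fun _ : ℝ => (1 : ℝ)) (ENNReal.ofReal 2) ν := by rw [h2]; exact hone
  have hcs := integral_mul_norm_le_Lp_mul_Lq (μ := ν) hpq hg2' hone'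
  simp only [norm_one, mul_one, norm_norm] at hcs
  have hstep1 : ‖∫ x in a..c, g x‖ ≤ ∫ x, ‖g x‖ ∂ν :=
    intervalIntegral.norm_integral_le_integral_norm_uIoc
  have hIpos : (0:ℝ) ≤ ∫ x in Ioo (-1:ℝ) 1, ‖g x‖^2 :=
    integral_nonneg fun x => by positivity
  have hmono : ∫ x, ‖g x‖ ^ (2:ℝ) ∂ν ≤ ∫ x in Ioo (-1:ℝ) 1, ‖g x‖^2 := by
    have : ∀ x : ℝ, ‖g x‖ ^ (2:ℝ) = ‖g x‖ ^ (2:ℕ) := fun x => by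
      rw [← Real.rpow_natCast ‖g x‖ 2]; norm_num
    simp_rw [this]
    exact setIntegral_mono_set hint
      (Filter.Eventually.of_forall fun x => by positivity)
      (HasSubset.Subset.eventuallyLE hsub')
  have hone2 : ∫ x, (1:ℝ) ^ (2:ℝ) ∂ν = |c - a| := by
    simp [integral_const, Measure.real, hνuniv, ENNReal.toReal_ofReal (abs_nonneg _)]
  calc ‖∫ x in a..c, g x‖ ≤ ∫ x, ‖g x‖ ∂ν := hstep1
    _ ≤ (∫ x, ‖g x‖ ^ (2:ℝ) ∂ν) ^ (1/(2:ℝ)) * (∫ x, (1:ℝ) ^ (2:ℝ) ∂ν) ^ (1/(2:ℝ)) := by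
        have := hcs
        simpa using this
    _ ≤ (∫ x in Ioo (-1:ℝ) 1, ‖g x‖^2) ^ (1/(2:ℝ)) * |c - a| ^ (1/(2:ℝ)) := by
        rw [hone2]
        gcongr
    _ = Real.sqrt |c - a| * Real.sqrt (∫ x in Ioo (-1:ℝ) 1, ‖g x‖^2) := by
        rw [Real.sqrt_eq_rpow, Real.sqrt_eq_rpow, mul_comm]

lemma odd_int_zero {g : ℝ → ℂ} (hcont : ContinuousOn g (Ioo (-1:ℝ) 1))
    (hodd : ∀ x ∈ Ioo (-1:ℝ) 1, g (-x) = - g x) {b : ℝ} (hb : b ∈ Ioo (-1:ℝ) 1) :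
    ∫ x in (-b)..b, g x = 0 := by
  have h0 : (0:ℝ) ∈ Ioo (-1:ℝ) 1 := by norm_num
  have hnb : -b ∈ Ioo (-1:ℝ) 1 := by
    obtain ⟨h1, h2⟩ := hb; exact ⟨by linarith, by linarith⟩
  have hsub1 : Set.uIcc (-b) 0 ⊆ Ioo (-1:ℝ) 1 :=
    (Set.ordConnected_Ioo).uIcc_subset hnb h0
  have hsub2 : Set.uIcc 0 b ⊆ Ioo (-1:ℝ) 1 :=
    (Set.ordConnected_Ioo).uIcc_subset h0 hb
  have i1 : IntervalIntegrable g volume (-b) 0 := (hcont.mono hsub1).intervalIntegrable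
  have i2 : IntervalIntegrable g volume 0 b := (hcont.mono hsub2).intervalIntegrable
  have hsplit := intervalIntegral.integral_add_adjacent_intervals i1 i2
  have h1 : (∫ x in (0:ℝ)..b, g (-x)) = ∫ x in (-b)..(0:ℝ), g x := by
    rw [intervalIntegral.integral_comp_neg (f := g)]; norm_num
  have h2 : (∫ x in (0:ℝ)..b, g (-x)) = ∫ x in (0:ℝ)..b, -g x :=
    intervalIntegral.integral_congr fun x hx => hodd x (hsub2 hx)
  rw [intervalIntegral.integral_neg] at h2
  rw [← hsplit, ← h1, h2]
  ring

/-- Pointwise decay of `u_{0,g}`: there is `C > 0` such that for every odd smooth `g` on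
`(-1,1)` with `∫|g|² < ∞`, all `s ≥ 0` and `y ∈ (-1,1)`,
`|u_{0,g}(s,y)| ≤ C e^{-s/2} (∫|g|²)^{1/2}`. -/
theorem stmt6 :
    ∃ C : ℝ, 0 < C ∧ ∀ g : ℝ → ℂ,
      ContDiffOn ℝ (⊤:ℕ∞) g (Ioo (-1:ℝ) 1) →
      (∀ x ∈ Ioo (-1:ℝ) 1, g (-x) = - g x) →
      IntegrableOn (fun x => ‖g x‖^2) (Ioo (-1:ℝ) 1) →
      ∀ s : ℝ, 0 ≤ s → ∀ y ∈ Ioo (-1:ℝ) 1,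
        ‖u0g g s y‖ ≤ C * Real.exp (-s/2) *
          Real.sqrt (∫ x in Ioo (-1:ℝ) 1, ‖g x‖^2) := by
  refine ⟨1, one_pos, fun g hsmooth hodd hint s hs y hy => ?_⟩
  obtain ⟨hy1, hy2⟩ := hy
  have hcont : ContinuousOn g (Ioo (-1:ℝ) 1) := hsmooth.continuousOn
  set E := Real.exp (-s) with hE
  have hE0 : 0 < E := Real.exp_pos _
  have hE1 : E ≤ 1 := Real.exp_le_one_iff.mpr (by linarith)
  set a := -1 + E * (1 + y) with ha
  set b := 1 - E * (1 - y) with hb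
  have hamem : a ∈ Ioo (-1:ℝ) 1 := ⟨by nlinarith, by nlinarith⟩
  have hbmem : b ∈ Ioo (-1:ℝ) 1 := ⟨by nlinarith, by nlinarith⟩
  have hcmem : -b ∈ Ioo (-1:ℝ) 1 := ⟨by obtain ⟨u,v⟩ := hbmem; linarith, by obtain ⟨u,v⟩ := hbmem; linarith⟩
  have hsubac : Set.uIcc a (-b) ⊆ Ioo (-1:ℝ) 1 :=
    (Set.ordConnected_Ioo).uIcc_subset hamem hcmem
  have hsubcb : Set.uIcc (-b) b ⊆ Ioo (-1:ℝ) 1 :=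
    (Set.ordConnected_Ioo).uIcc_subset hcmem hbmem
  have i1 : IntervalIntegrable g volume a (-b) := (hcont.mono hsubac).intervalIntegrable
  have i2 : IntervalIntegrable g volume (-b) b := (hcont.mono hsubcb).intervalIntegrable
  have hsplit := intervalIntegral.integral_add_adjacent_intervals i1 i2
  have hzero : (∫ x in (-b)..b, g x) = 0 := odd_int_zero hcont hodd hbmem
  have hkey : (∫ x in a..b, g x) = ∫ x in a..(-b), g x := by
    rw [← hsplit, hzero, add_zero]
  have hIpos : (0:ℝ) ≤ ∫ x in Ioo (-1:ℝ) 1, ‖g x‖^2 :=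
    integral_nonneg fun x => by positivity
  set I := ∫ x in Ioo (-1:ℝ) 1, ‖g x‖^2 with hI
  have hbound : ‖∫ x in a..(-b), g x‖ ≤ Real.sqrt |(-b) - a| * Real.sqrt I :=
    cs_bound a (-b) hsubac hcont hint
  have habs : |(-b) - a| ≤ 2 * E := by
    have : (-b) - a = -2 * E * y := by rw [hb, ha]; ring
    rw [this, abs_mul, abs_mul]
    rw [abs_of_nonpos (by norm_num : (-2:ℝ) ≤ 0), abs_of_pos hE0]
    have : |y| ≤ 1 := by rw [abs_le]; constructor <;> linarith
    nlinarith
  have hsqE : Real.sqrt (2 * E) = Real.sqrt 2 * Real.exp (-s/2) := by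
    rw [Real.sqrt_mul (by norm_num), hE]
    congr 1
    rw [show (-s/2) = (-s)/2 by ring, Real.exp_half]
  have hsq2 : Real.sqrt 2 ≤ 2 := by
    nlinarith [Real.sq_sqrt (show (0:ℝ) ≤ 2 by norm_num), Real.sqrt_nonneg 2]
  have hfinal : ‖∫ x in a..b, g x‖ ≤ Real.sqrt 2 * Real.exp (-s/2) * Real.sqrt I := by
    rw [hkey]
    calc ‖∫ x in a..(-b), g x‖ ≤ Real.sqrt |(-b) - a| * Real.sqrt I := hbound
      _ ≤ Real.sqrt (2 * E) * Real.sqrt I := by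
          gcongr

      _ = Real.sqrt 2 * Real.exp (-s/2) * Real.sqrt I := by rw [hsqE]
  have hnorm : ‖u0g g s y‖ = (1/2) * ‖∫ x in a..b, g x‖ := by
    rw [u0g, norm_mul]
    norm_num
    rfl
  rw [hnorm]
  have he : (0:ℝ) < Real.exp (-s/2) := Real.exp_pos _
  have hsI : (0:ℝ) ≤ Real.sqrt I := Real.sqrt_nonneg _
  nlinarith [Real.sqrt_nonneg (2:ℝ), mul_nonneg he.le hsI]
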